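/- Let G be a finite simple graph with adjacency matrix A having eigenvalues λ₁ ≥ … ≥ λₙ. If S ⊆ V(G) is an independent set, then |S| ≤ n⁰(A) + min{n⁺(A), n⁻(A)}, where n⁺, n⁰, n⁻ denote the numbers of positive, zero, and negative eigenvalues of A (Cvetković's inertia bound). -/

import Mathlib

open Matrix Finset

section Aux

variable {ι E : Type*} [Fintype ι] [DecidableEq ι]
  [NormedAddCommGroup E] [InnerProductSpace ℝ E]

omit [DecidableEq ι] in
lemma aux_repr_eq_zero (B : OrthonormalBasis ι ℝ E) (T : Finset ι) {x : E}
    (hx : x ∈ Submodule.span ℝ (⇑B '' ↑T)) {i : ι} (hi : i ∉ T) : B.repr x i = 0 := by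
  rw [B.repr_apply_apply]
  induction hx using Submodule.span_induction with
  | mem y hy =>
    obtain ⟨j, hj, rfl⟩ := hy
    exact B.orthonormal.2 (fun h => hi (h ▸ hj))
  | zero => simp
  | add y z _ _ hy hz => rw [inner_add_right, hy, hz, add_zero]
  | smul c y _ hy => rw [inner_smul_right, hy, mul_zero]

omit [DecidableEq ι] in
lemma aux_finrank_span (B : OrthonormalBasis ι ℝ E) (T : Finset ι) :
    Module.finrank ℝ (Submodule.span ℝ (⇑B '' ↑T)) = T.card := by
  have hli : LinearIndependent ℝ ((↑T : Set ι).domRestrict ⇑B) :=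
    (B.orthonormal.comp _ Subtype.val_injective).linearIndependent
  rw [← Set.range_restrict, finrank_span_eq_card hli]
  simp

end Aux

section Main

variable {V : Type*} [Fintype V] [DecidableEq V]

omit [DecidableEq V] in
lemma my_dotProduct_sum {ι : Type*} (s : Finset ι) (v : V → ℝ) (f : ι → V → ℝ) :
    v ⬝ᵥ (∑ i ∈ s, f i) = ∑ i ∈ s, v ⬝ᵥ (f i) := by
  simp only [dotProduct, Finset.sum_apply, Finset.mul_sum]
  exact Finset.sum_comm

omit [DecidableEq V] in
lemma my_sum_dotProduct {ι : Type*} (s : Finset ι) (v : V → ℝ) (f : ι → V → ℝ) :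
    (∑ i ∈ s, f i) ⬝ᵥ v = ∑ i ∈ s, (f i) ⬝ᵥ v := by
  rw [dotProduct_comm, my_dotProduct_sum]
  simp [dotProduct_comm]

omit [DecidableEq V] in
lemma my_mulVec_sum {ι : Type*} (s : Finset ι) (A : Matrix V V ℝ) (f : ι → V → ℝ) :
    A *ᵥ (∑ i ∈ s, f i) = ∑ i ∈ s, A *ᵥ f i := by
  ext k
  simp only [mulVec, Finset.sum_apply]
  exact my_dotProduct_sum s (A k) f

lemma aux_quadform (A : Matrix V V ℝ) (hA : A.IsHermitian) (x : EuclideanSpace ℝ V) :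
    x ⬝ᵥ (A *ᵥ x) = ∑ i, hA.eigenvalues i * (hA.eigenvectorBasis.repr x i)^2 := by
  set B := hA.eigenvectorBasis
  have hx : x = ∑ i, B.repr x i • (B i : EuclideanSpace ℝ V) := (B.sum_repr x).symm
  have hBd : ∀ i j : V, (B i : V → ℝ) ⬝ᵥ (B j : V → ℝ) = if i = j then 1 else 0 := by
    intro i j
    have := orthonormal_iff_ite.mp B.orthonormal i j
    simpa [PiLp.inner_apply, RCLike.inner_apply, dotProduct, mul_comm] using this
  conv_lhs => rw [hx]
  have hmul : A *ᵥ (∑ i, B.repr x i • (B i : EuclideanSpace ℝ V))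
      = ∑ i, (B.repr x i * hA.eigenvalues i) • (B i : V → ℝ) := by
    rw [my_mulVec_sum]
    refine Finset.sum_congr rfl fun i _ => ?_
    rw [mulVec_smul,
      show A *ᵥ (B i : V → ℝ) = hA.eigenvalues i • (B i : V → ℝ) from hA.mulVec_eigenvectorBasis i,
      smul_smul, mul_comm]
  simp only [WithLp.ofLp_sum, WithLp.ofLp_smul]
  rw [hmul, my_dotProduct_sum]
  refine Finset.sum_congr rfl fun j _ => ?_
  rw [dotProduct_smul, my_sum_dotProduct]
  rw [Finset.sum_eq_single j]
  · rw [smul_dotProduct, hBd j j]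
    simp [smul_eq_mul]
    ring
  · intro i _ hij
    rw [smul_dotProduct, hBd i j, if_neg hij]
    simp
  · simp

lemma aux_card (G : SimpleGraph V) [DecidableRel G.Adj]
    (hA : (G.adjMatrix ℝ).IsHermitian) (S : Finset V)
    (hS : ∀ u ∈ S, ∀ v ∈ S, ¬ G.Adj u v) (T : Finset V) (ε : ℝ)
    (hT : ∀ i ∈ T, 0 < ε * hA.eigenvalues i) :
    S.card + T.card ≤ Fintype.card V := by
  classical
  set B := hA.eigenvectorBasis
  set B₀ := EuclideanSpace.basisFun V ℝ
  set W : Submodule ℝ (EuclideanSpace ℝ V) := Submodule.span ℝ (⇑B₀ '' ↑S)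
  set P : Submodule ℝ (EuclideanSpace ℝ V) := Submodule.span ℝ (⇑B '' ↑T)
  have hdis : Disjoint W P := by
    rw [Submodule.disjoint_def]
    intro x hxW hxP
    by_contra hx0
    -- coordinates of x vanish off S
    have hsupp : ∀ v ∉ S, x v = 0 := fun v hv => by
      simpa [B₀, EuclideanSpace.basisFun_repr] using aux_repr_eq_zero B₀ S hxW hv
    -- the quadratic form vanishes on x
    have hQ0 : x ⬝ᵥ ((G.adjMatrix ℝ) *ᵥ x) = 0 := by
      rw [dotProduct, Finset.sum_eq_zero]
      intro u _
      rcases eq_or_ne (x u) 0 with h | h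
      · simp [h]
      · have hu : u ∈ S := by by_contra hu; exact h (hsupp u hu)
        rw [mulVec, dotProduct, Finset.sum_eq_zero, mul_zero]
        intro v _
        rcases eq_or_ne (x v) 0 with h' | h'
        · simp [h']
        · have hv : v ∈ S := by by_contra hv; exact h' (hsupp v hv)
          rw [SimpleGraph.adjMatrix_apply, if_neg (hS u hu v hv), zero_mul]
    -- but the quadratic form is sign-definite on P
    have hrepr : ∀ i ∉ T, B.repr x i = 0 := fun i hi => aux_repr_eq_zero B T hxP hi
    have hQpos : 0 < ε * (x ⬝ᵥ ((G.adjMatrix ℝ) *ᵥ x)) := by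
      rw [aux_quadform _ hA x, Finset.mul_sum]
      rw [← Finset.sum_subset (Finset.subset_univ T)]
      · refine Finset.sum_pos' (fun i hi => ?_) ?_
        · have := (hT i hi).le
          nlinarith [sq_nonneg (B.repr x i)]
        · have : ∃ i ∈ T, B.repr x i ≠ 0 := by
            by_contra hc
            push_neg at hc
            apply hx0
            have : B.repr x = 0 := by
              ext i
              by_cases hi : i ∈ T
              · exact hc i hi
              · exact hrepr i hi
            simpa using B.repr.injective (by simpa using this)
          obtain ⟨i, hi, hne⟩ := this
          exact ⟨i, hi, by nlinarith [hT i hi, sq_pos_of_ne_zero hne]⟩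
      · intro i _ hi
        rw [hrepr i hi]
        ring
    rw [hQ0] at hQpos
    simp at hQpos
  have h1 : Module.finrank ℝ W = S.card := aux_finrank_span B₀ S
  have h2 : Module.finrank ℝ P = T.card := aux_finrank_span B T
  have := Submodule.finrank_sup_add_finrank_inf_eq W P
  rw [hdis.eq_bot, h1, h2] at this
  simp only [finrank_bot, add_zero] at this
  calc S.card + T.card = Module.finrank ℝ ↥(W ⊔ P) := this.symm
    _ ≤ Module.finrank ℝ (EuclideanSpace ℝ V) := Submodule.finrank_le _
    _ = Fintype.card V := finrank_euclideanSpace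

end Main

theorem inertia_bound_indep_set {V : Type*} [Fintype V] [DecidableEq V]
    (G : SimpleGraph V) [DecidableRel G.Adj]
    (hA : (G.adjMatrix ℝ).IsHermitian)
    (S : Finset V) (hS : ∀ u ∈ S, ∀ v ∈ S, ¬ G.Adj u v) :
    S.card ≤ (univ.filter fun i => hA.eigenvalues i = 0).card +
      min (univ.filter fun i => 0 < hA.eigenvalues i).card
          (univ.filter fun i => hA.eigenvalues i < 0).card := by
  classical
  have hpos := aux_card G hA S hS (univ.filter fun i => 0 < hA.eigenvalues i) 1
    (fun i hi => by simpa using (Finset.mem_filter.mp hi).2)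
  have hneg := aux_card G hA S hS (univ.filter fun i => hA.eigenvalues i < 0) (-1)
    (fun i hi => by
      have := (Finset.mem_filter.mp hi).2
      linarith)
  have hsum : (univ.filter fun i => hA.eigenvalues i = 0).card
      + ((univ.filter fun i => 0 < hA.eigenvalues i).card
      + (univ.filter fun i => hA.eigenvalues i < 0).card) = Fintype.card V := by
    have h := Finset.card_filter_add_card_filter_not
      (s := (univ : Finset V)) (p := fun i => hA.eigenvalues i = 0)
    rw [Finset.card_univ] at h
    have hu : (univ.filter fun i => ¬ hA.eigenvalues i = 0)
        = (univ.filter fun i => 0 < hA.eigenvalues i)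
          ∪ (univ.filter fun i => hA.eigenvalues i < 0) := by
      ext i
      simp only [Finset.mem_filter, Finset.mem_univ, true_and, Finset.mem_union]
      constructor
      · intro h; exact Or.symm (Ne.lt_or_gt h)
      · rintro (h | h)
        · exact ne_of_gt h
        · exact ne_of_lt h
    rw [hu, Finset.card_union_of_disjoint] at h
    · omega
    · rw [Finset.disjoint_left]
      intro i hi hi'
      simp only [Finset.mem_filter] at hi hi'
      linarith [hi.2, hi'.2]
  omega
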